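/- Assume: λ is a singular cardinal with cf(λ) = θ; (λ_i : i < θ) is an increasing sequence of regular cardinals with θ < λ₀, λ = ⋃_{i<θ} λ_i and 2^{λ_i} = λ_i⁺ for every i < θ; κ is a regular cardinal above λ; there is a sequence (f_α : α < κ) in ∏_{i<θ} λ_i that is increasing and cofinal in ∏_{i<θ} λ_i modulo the ideal of bounded subsets of θ; and there is a sequence (g_α : α < κ) in ∏_{i<θ} λ_i⁺ that is increasing and cofinal in ∏_{i<θ} λ_i⁺ modulo the ideal of bounded subsets of θ. Then 𝔡_λ ≥ κ. -/

import Mathlib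

open Cardinal

/-- `f ≤* g` in `μ^μ`: the set of counterexamples to domination has size `< μ`.
Here `μ` is represented by its canonical well-ordered type `μ.ord.ToType`. -/
def AlmostLE (μ : Cardinal) (f g : μ.ord.ToType → μ.ord.ToType) : Prop :=
  #↥{β : μ.ord.ToType | g β < f β} < μ

/-- The dominating number `𝔡_μ`: the minimal size of a family `D ⊆ μ^μ` such that
every `f ∈ μ^μ` is `≤*`-dominated by a member of `D`. -/
noncomputable def dNumber (μ : Cardinal) : Cardinal :=
  sInf {c : Cardinal | ∃ D : Set (μ.ord.ToType → μ.ord.ToType),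
    (∀ f : μ.ord.ToType → μ.ord.ToType, ∃ g ∈ D, AlmostLE μ f g) ∧ #↥D = c}

namespace Stmt16Aux

/-- The ordinal index of an element of `o.ToType`. -/
noncomputable def ordIdx {o : Ordinal} (x : o.ToType) : Ordinal :=
  ((Ordinal.ToType.mk (o := o)).symm x : Ordinal)

theorem ordIdx_lt {o : Ordinal} (x : o.ToType) : ordIdx x < o :=
  ((Ordinal.ToType.mk (o := o)).symm x).2

/-- The element of `o.ToType` with a given ordinal index. -/
noncomputable def ofIdx {o : Ordinal} (a : Ordinal) (h : a < o) : o.ToType :=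
  Ordinal.ToType.mk (o := o) ⟨a, h⟩

@[simp] theorem ordIdx_ofIdx {o a : Ordinal} (h : a < o) : ordIdx (ofIdx a h) = a := by
  simp [ordIdx, ofIdx]

theorem lt_iff_ordIdx {o : Ordinal} (x y : o.ToType) : x < y ↔ ordIdx x < ordIdx y := by
  unfold ordIdx
  rw [Subtype.coe_lt_coe, OrderIso.lt_iff_lt]

theorem ofIdx_eq_of_ordIdx {o : Ordinal} (x : o.ToType) {a : Ordinal} (h : a < o)
    (hx : ordIdx x = a) : ofIdx a h = x := by
  have : (⟨a, h⟩ : Set.Iio o) = (Ordinal.ToType.mk (o := o)).symm x := by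
    ext; exact hx.symm
  rw [ofIdx, this]
  exact (Ordinal.ToType.mk (o := o)).apply_symm_apply x

theorem ofIdx_congr {o a a' : Ordinal} (h : a < o) (h' : a' < o) (ha : a = a') :
    ofIdx a h = ofIdx a' h' := by subst ha; rfl

end Stmt16Aux

open Stmt16Aux in
/-- Assume `λ` is singular with `cf(λ) = θ`, `(λ_i : i < θ)` is an increasing sequence
of regular cardinals with `θ < λ_0`, `λ = ⋃_{i<θ} λ_i` and `2^{λ_i} = λ_i⁺`; `κ` is
regular with `λ < κ`; and there are sequences of length `κ` increasing and cofinal in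
`∏_{i<θ} λ_i` and in `∏_{i<θ} λ_i⁺` modulo the ideal of bounded subsets of `θ`
(i.e. `tcf(∏ λ_i, J^bd) = tcf(∏ λ_i⁺, J^bd) = κ`).  Then `𝔡_λ ≥ κ`. -/
theorem stmt16 (lam th kap : Cardinal)
    (lams : th.ord.ToType → Cardinal)
    (hinf : ℵ₀ ≤ lam) (hsing : lam.ord.cof < lam) (hth : lam.ord.cof = th)
    (hmono : ∀ i j : th.ord.ToType, i < j → lams i < lams j)
    (hregs : ∀ i, (lams i).IsRegular)
    (hth0 : ∀ i, th < lams i)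
    (hsup : lam = ⨆ i, lams i)
    (hgch : ∀ i, (2 : Cardinal) ^ lams i = Order.succ (lams i))
    (hkap : kap.IsRegular) (hlk : lam < kap)
    (fseq gseq : kap.ord.ToType → th.ord.ToType → Ordinal)
    (hfmem : ∀ α i, fseq α i < (lams i).ord)
    (hfinc : ∀ α β : kap.ord.ToType, α < β →
      ∃ i0, ∀ i, i0 < i → fseq α i < fseq β i)
    (hfcof : ∀ x : th.ord.ToType → Ordinal, (∀ i, x i < (lams i).ord) →
      ∃ α, ∃ i0, ∀ i, i0 < i → x i < fseq α i)
    (hgmem : ∀ α i, gseq α i < (Order.succ (lams i)).ord)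
    (hginc : ∀ α β : kap.ord.ToType, α < β →
      ∃ i0, ∀ i, i0 < i → gseq α i < gseq β i)
    (hgcof : ∀ x : th.ord.ToType → Ordinal, (∀ i, x i < (Order.succ (lams i)).ord) →
      ∃ α, ∃ i0, ∀ i, i0 < i → x i < gseq α i) :
    kap ≤ dNumber lam := by
  classical
  -- basic facts
  have hθinf : ℵ₀ ≤ th := by
    rw [← hth]; exact Ordinal.aleph0_le_cof.2 (Cardinal.isSuccLimit_ord hinf)
  have hthlam : th ≤ lam := (hth ▸ hsing).le
  have hlam0 : lam ≠ 0 := (aleph0_pos.trans_le hinf).ne'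
  have hθ0 : th ≠ 0 := (aleph0_pos.trans_le hθinf).ne'
  haveI : NoMaxOrder th.ord.ToType := Cardinal.noMaxOrder hθinf
  haveI hlamne : Nonempty lam.ord.ToType :=
    Ordinal.nonempty_toType_iff.2 (fun h => hlam0 (Cardinal.ord_eq_zero.1 h))
  haveI hθne : Nonempty th.ord.ToType :=
    Ordinal.nonempty_toType_iff.2 (fun h => hθ0 (Cardinal.ord_eq_zero.1 h))
  have hbdd : BddAbove (Set.range lams) := Cardinal.bddAbove_range _
  have hLle : ∀ t, lams t ≤ lam := fun t =>
    le_of_le_of_eq (le_ciSup hbdd t) hsup.symm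
  have hLlt : ∀ t, lams t < lam := fun t => by
    obtain ⟨t', ht'⟩ := exists_gt t
    exact (hmono t t' ht').trans_le (hLle t')
  have hLinf : ∀ t, ℵ₀ ≤ lams t := fun t => (hregs t).aleph0_le
  have mklam : #lam.ord.ToType = lam := by rw [Cardinal.mk_toType, Cardinal.card_ord]
  have mkθ : #th.ord.ToType = th := by rw [Cardinal.mk_toType, Cardinal.card_ord]
  have mkL : ∀ t, #(lams t).ord.ToType = lams t := fun t => by
    rw [Cardinal.mk_toType, Cardinal.card_ord]
  have mkS : ∀ t, #(Order.succ (lams t)).ord.ToType = Order.succ (lams t) := fun t => by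
    rw [Cardinal.mk_toType, Cardinal.card_ord]
  -- reduce to a statement about each dominating family
  refine le_csInf ⟨#(Set.univ : Set (lam.ord.ToType → lam.ord.ToType)),
    Set.univ, fun f => ⟨f, Set.mem_univ f, ?_⟩, rfl⟩ ?_
  · show #↥{β : lam.ord.ToType | f β < f β} < lam
    have hempty : {β : lam.ord.ToType | f β < f β} = ∅ := by
      ext β; simp
    rw [hempty]
    simpa using aleph0_pos.trans_le hinf
  rintro c ⟨D, hDdom, rfl⟩
  by_contra hcon
  rw [not_le] at hcon
  -- a big embedding splitting `λ` into θ many blocks, each split into λ_t fibers of size λ_t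
  have hsig : #(Σ t : th.ord.ToType, ((lams t).ord.ToType × (lams t).ord.ToType))
      ≤ #lam.ord.ToType := by
    rw [Cardinal.mk_sigma, mklam]
    calc (Cardinal.sum fun t => #((lams t).ord.ToType × (lams t).ord.ToType))
        ≤ Cardinal.sum (fun _ : th.ord.ToType => lam) := by
          refine Cardinal.sum_le_sum _ _ fun t => ?_
          simp only [Cardinal.mk_prod, Cardinal.lift_id, mkL]
          rw [Cardinal.mul_eq_self (hLinf t)]
          exact hLle t
      _ = th * lam := by rw [Cardinal.sum_const', mkθ]
      _ = lam := by
          rw [Cardinal.mul_eq_max hθinf hinf]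
          exact max_eq_right hthlam
  obtain ⟨e⟩ := (Cardinal.le_def _ _).1 hsig
  -- a level function
  have hlev' : ∀ y : lam.ord.ToType, ∃ m, ordIdx y < (lams m).ord := by
    intro y
    have h1 : (ordIdx y).card < lam := Cardinal.lt_ord.1 (ordIdx_lt y)
    have h2 : ∃ m, (ordIdx y).card < lams m := by
      by_contra hno
      push_neg at hno
      have : lam ≤ (ordIdx y).card := le_of_eq_of_le hsup (ciSup_le hno)
      exact absurd h1 (not_lt.2 this)
    obtain ⟨m, hm⟩ := h2
    exact ⟨m, Cardinal.lt_ord.2 hm⟩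
  choose lev hlev using hlev'
  -- GCH: enumerate all "level patterns" on each block by the successor cardinal
  have hPs : ∀ t : th.ord.ToType, ∃ s : (Order.succ (lams t)).ord.ToType →
      (((lams t).ord.ToType × (lams t).ord.ToType) → th.ord.ToType), Function.Surjective s := by
    intro t
    have hle : #(((lams t).ord.ToType × (lams t).ord.ToType) → th.ord.ToType)
        ≤ #(Order.succ (lams t)).ord.ToType := by
      rw [mkS t, ← Cardinal.power_def]
      simp only [Cardinal.mk_prod, Cardinal.lift_id, mkL, mkθ]
      rw [Cardinal.mul_eq_self (hLinf t)]
      calc th ^ lams t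
          ≤ (2 ^ th) ^ lams t := Cardinal.power_le_power_right (Cardinal.cantor th).le
        _ = 2 ^ (th * lams t) := Cardinal.power_mul.symm
        _ = 2 ^ lams t := by
            rw [Cardinal.mul_eq_max hθinf (hLinf t), max_eq_right (hth0 t).le]
        _ = Order.succ (lams t) := hgch t
    obtain ⟨i⟩ := (Cardinal.le_def _ _).1 hle
    exact ⟨Function.invFun i, fun p => ⟨i p, Function.leftInverse_invFun i.injective p⟩⟩
  choose pat hpat using hPs
  -- each member of D determines, per block, a level pattern; pick its index
  have hxd : ∀ (d : ↥D) (t : th.ord.ToType), ∃ x,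
      pat t x = fun pr : ((lams t).ord.ToType × (lams t).ord.ToType) =>
        lev ((d : lam.ord.ToType → lam.ord.ToType) (e ⟨t, pr⟩)) :=
    fun d t => hpat t _
  choose xd hxdEq using hxd
  -- the indices are caught by the scale on ∏ λ_t⁺
  have hα' : ∀ d : ↥D, ∃ α, ∃ i0, ∀ t, i0 < t → ordIdx (xd d t) < gseq α t :=
    fun d => hgcof _ (fun t => ordIdx_lt (xd d t))
  choose αd i0d hαd using hα'
  -- a single scale member above all members of D
  have hbd : ∃ αs, ∀ d : ↥D, αd d < αs := by
    have hlim : Order.IsSuccLimit kap.ord := Cardinal.isSuccLimit_ord hkap.aleph0_le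
    have h1 : (⨆ d : ↥D, ordIdx (αd d) + 1) < kap.ord := by
      refine Cardinal.iSup_lt_ord_of_isRegular hkap hcon fun d => ?_
      rw [Ordinal.add_one_eq_succ]
      exact hlim.succ_lt (ordIdx_lt _)
    refine ⟨ofIdx _ h1, fun d => ?_⟩
    rw [lt_iff_ordIdx, ordIdx_ofIdx]
    refine lt_of_lt_of_le ?_ (le_ciSup (Ordinal.bddAbove_range _) d)
    rw [Ordinal.add_one_eq_succ]
    exact Order.lt_succ _
  obtain ⟨αs, hαs⟩ := hbd
  have hup : ∀ d : ↥D, ∃ i1, ∀ t, i1 < t → gseq (αd d) t < gseq αs t :=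
    fun d => hginc _ _ (hαs d)
  choose i1d hi1d using hup
  -- fiber selectors: on each block, each pattern whose index is below `gseq αs t`
  -- is selected on some fiber
  have hsel : ∀ t : th.ord.ToType,
      ∃ σ : (lams t).ord.ToType → (Order.succ (lams t)).ord.ToType,
      ∀ x, ordIdx x < gseq αs t → ∃ η, σ η = x := by
    intro t
    haveI : Nonempty (Order.succ (lams t)).ord.ToType := by
      refine Ordinal.nonempty_toType_iff.2 (fun h => ?_)
      have : Order.succ (lams t) = 0 := Cardinal.ord_eq_zero.1 h
      have h2 : lams t < (0 : Cardinal) := this ▸ Order.lt_succ (lams t)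
      exact absurd h2 (by simp)
    have hcard : (gseq αs t).card ≤ lams t :=
      Order.lt_succ_iff.1 (Cardinal.lt_ord.1 (hgmem αs t))
    have hle : #(gseq αs t).ToType ≤ #(lams t).ord.ToType := by
      rw [Cardinal.mk_toType, mkL]; exact hcard
    obtain ⟨j⟩ := (Cardinal.le_def _ _).1 hle
    refine ⟨fun η => if h : ∃ y, j y = η then
        ofIdx (ordIdx (Classical.choose h)) ((ordIdx_lt _).trans (hgmem αs t))
      else Classical.arbitrary _, fun x hx => ?_⟩
    refine ⟨j (ofIdx (ordIdx x) hx), ?_⟩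
    have hex : ∃ y, j y = j (ofIdx (ordIdx x) hx) := ⟨_, rfl⟩
    dsimp only
    rw [dif_pos hex]
    refine ofIdx_eq_of_ordIdx x _ ?_
    have hy : Classical.choose hex = ofIdx (ordIdx x) hx :=
      j.injective (Classical.choose_spec hex)
    rw [hy, ordIdx_ofIdx]
  choose σ hσ using hsel
  -- the escaping function
  let fstar : lam.ord.ToType → lam.ord.ToType := fun β =>
    if h : ∃ p : (Σ t : th.ord.ToType, ((lams t).ord.ToType × (lams t).ord.ToType)),
        e p = β then
      ofIdx (lams (pat (Classical.choose h).1
          (σ (Classical.choose h).1 (Classical.choose h).2.1) (Classical.choose h).2)).ord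
        (Cardinal.ord_lt_ord.2 (hLlt _))
    else Classical.arbitrary _
  obtain ⟨g, hgD, hgle⟩ := hDdom fstar
  set d : ↥D := ⟨g, hgD⟩ with hd
  -- fstar escapes g on a set of size λ
  have key : ∀ s : th.ord.ToType, lams s ≤ #↥{β : lam.ord.ToType | g β < fstar β} := by
    intro s
    obtain ⟨t, ht⟩ := exists_gt (max s (max (i0d d) (i1d d)))
    have hst : s < t := (le_max_left _ _).trans_lt ht
    have h0t : i0d d < t := ((le_max_left _ _).trans (le_max_right _ _)).trans_lt ht
    have h1t : i1d d < t := ((le_max_right _ _).trans (le_max_right _ _)).trans_lt ht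
    have hπG : ordIdx (xd d t) < gseq αs t := (hαd d t h0t).trans (hi1d d t h1t)
    obtain ⟨η, hη⟩ := hσ t (xd d t) hπG
    have hmem : ∀ ξ : (lams t).ord.ToType, g (e ⟨t, (η, ξ)⟩) < fstar (e ⟨t, (η, ξ)⟩) := by
      intro ξ
      have hex : ∃ p, e p = e ⟨t, (η, ξ)⟩ := ⟨_, rfl⟩
      have hch : Classical.choose hex = ⟨t, (η, ξ)⟩ := e.injective (Classical.choose_spec hex)
      have hm : pat (Classical.choose hex).1
          (σ (Classical.choose hex).1 (Classical.choose hex).2.1) (Classical.choose hex).2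
          = lev (g (e ⟨t, (η, ξ)⟩)) := by
        rw [hch, hη, hxdEq d t]
      have hfs : fstar (e ⟨t, (η, ξ)⟩)
          = ofIdx (lams (lev (g (e ⟨t, (η, ξ)⟩)))).ord (Cardinal.ord_lt_ord.2 (hLlt _)) := by
        show (if h : _ then _ else _) = _
        rw [dif_pos hex]
        exact ofIdx_congr _ _ (by rw [hm])
      rw [hfs, lt_iff_ordIdx, ordIdx_ofIdx]
      exact hlev _
    have hinj : Function.Injective (fun ξ : (lams t).ord.ToType =>
        (⟨e ⟨t, (η, ξ)⟩, hmem ξ⟩ : ↥{β : lam.ord.ToType | g β < fstar β})) := by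
      intro ξ ξ' hEq
      have h2 := e.injective (congrArg Subtype.val hEq)
      have h3 := (Sigma.mk.inj_iff.1 h2).2
      have h4 : (η, ξ) = (η, ξ') := eq_of_heq h3
      exact (Prod.ext_iff.1 h4).2
    calc lams s ≤ lams t := (hmono s t hst).le
      _ = #(lams t).ord.ToType := (mkL t).symm
      _ ≤ #↥{β : lam.ord.ToType | g β < fstar β} := Cardinal.mk_le_of_injective hinj
  have hbig : lam ≤ #↥{β : lam.ord.ToType | g β < fstar β} :=
    le_of_eq_of_le hsup (ciSup_le key)
  have : ¬ AlmostLE lam fstar g := not_lt.2 hbig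
  exact this hgle
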